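/- Assume |Φ(r₀) − Φ(r_b)| ≤ κ₀·b for some b > 0, let c ≥ b, and let μ be a real number with λ₋(b) ≤ μ ≤ λ₊(b). Then also λ₋(c) ≤ μ ≤ λ₊(c), and: (a) ∫₀^c ζ_{(μ,c)}(x) dx − ∫₀^b ζ_{(μ,b)}(x) dx = μ·(c − b); (b) the set { x ∈ [0,c] : ζ_{(μ,c)}(x) = μ } is a nonempty closed interval of length at least c − b. -/

import Mathlib

open MeasureTheory

/-- The increasing bijection `Φ : ℝ → (−1,1)`, `Φ(u) = u/√(1+u²)`. -/
noncomputable def Phi (u : ℝ) : ℝ := u / Real.sqrt (1 + u ^ 2)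

/-- The inverse `Ψ : (−1,1) → ℝ` of `Φ`, `Ψ(v) = v/√(1−v²)`. -/
noncomputable def Psi (v : ℝ) : ℝ := v / Real.sqrt (1 - v ^ 2)

/-- `g₊`: the solution of `g' = κ₀(1+g²)^{3/2}`, `g(0) = r₀`, with value `+∞` after
blow-up. -/
noncomputable def gp (κ₀ r₀ : ℝ) (x : ℝ) : EReal :=
  if Phi r₀ + κ₀ * x < 1 then ((Psi (Phi r₀ + κ₀ * x) : ℝ) : EReal) else ⊤

/-- `g₋`: the solution of `g' = −κ₀(1+g²)^{3/2}`, `g(0) = r₀`, with value `−∞` after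
blow-up. -/
noncomputable def gm (κ₀ r₀ : ℝ) (x : ℝ) : EReal :=
  if -1 < Phi r₀ - κ₀ * x then ((Psi (Phi r₀ - κ₀ * x) : ℝ) : EReal) else ⊥

/-- `h₊^c`: the solution of `h' = −κ₀(1+h²)^{3/2}`, `h(c) = r_b`, with value `+∞`
before blow-up. -/
noncomputable def hp (κ₀ rb : ℝ) (c : ℝ) (x : ℝ) : EReal :=
  if Phi rb + κ₀ * (c - x) < 1 then ((Psi (Phi rb + κ₀ * (c - x)) : ℝ) : EReal) else ⊤

/-- `h₋^c`: the solution of `h' = κ₀(1+h²)^{3/2}`, `h(c) = r_b`, with value `−∞`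
before blow-up. -/
noncomputable def hm (κ₀ rb : ℝ) (c : ℝ) (x : ℝ) : EReal :=
  if -1 < Phi rb - κ₀ * (c - x) then ((Psi (Phi rb - κ₀ * (c - x)) : ℝ) : EReal) else ⊥

/-- `λ₊(c)`, the level at which the graphs of `g₊` and `h₊^c` intersect (`+∞` if they
do not). -/
noncomputable def lamP (κ₀ r₀ rb : ℝ) (c : ℝ) : EReal :=
  if (Phi r₀ + Phi rb + κ₀ * c) / 2 < 1 then
    ((Psi ((Phi r₀ + Phi rb + κ₀ * c) / 2) : ℝ) : EReal) else ⊤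

/-- `λ₋(c)`, the level at which the graphs of `g₋` and `h₋^c` intersect (`−∞` if they
do not). -/
noncomputable def lamM (κ₀ r₀ rb : ℝ) (c : ℝ) : EReal :=
  if -1 < (Phi r₀ + Phi rb - κ₀ * c) / 2 then
    ((Psi ((Phi r₀ + Phi rb - κ₀ * c) / 2) : ℝ) : EReal) else ⊥

/-- The median (third smallest) of five extended reals, as the max over 3-element
subsets of their min. -/
noncomputable def med5 (a b c d e : EReal) : EReal :=
  (a ⊓ b ⊓ c) ⊔ (a ⊓ b ⊓ d) ⊔ (a ⊓ b ⊓ e) ⊔ (a ⊓ c ⊓ d) ⊔ (a ⊓ c ⊓ e) ⊔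
    (a ⊓ d ⊓ e) ⊔ (b ⊓ c ⊓ d) ⊔ (b ⊓ c ⊓ e) ⊔ (b ⊓ d ⊓ e) ⊔ (c ⊓ d ⊓ e)

/-- `ζ_{(μ,c)}(x)`: the median of `h₋^c(x), g₋(x), μ, g₊(x), h₊^c(x)` (a real number
whenever `λ₋(c) ≤ μ ≤ λ₊(c)`). -/
noncomputable def zeta (κ₀ r₀ rb : ℝ) (μ c : ℝ) (x : ℝ) : ℝ :=
  (med5 (hm κ₀ rb c x) (gm κ₀ r₀ x) ((μ : ℝ) : EReal) (gp κ₀ r₀ x)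
    (hp κ₀ rb c x)).toReal

/-- For `c ≥ b` and real `μ ∈ [λ₋(b), λ₊(b)]`: also `μ ∈ [λ₋(c), λ₊(c)]`;
(a) `∫₀^c ζ_{(μ,c)} − ∫₀^b ζ_{(μ,b)} = μ(c−b)`; and (b) `{x ∈ [0,c] : ζ_{(μ,c)}(x) = μ}`
is a nonempty closed interval of length at least `c − b`. -/

lemma phi_abs_lt (u : ℝ) : |Phi u| < 1 := by
  have h0 : (0:ℝ) < 1 + u ^ 2 := by positivity
  have hs : Real.sqrt (1 + u ^ 2) ^ 2 = 1 + u ^ 2 := Real.sq_sqrt h0.le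
  have hsp : 0 < Real.sqrt (1 + u ^ 2) := Real.sqrt_pos.mpr h0
  rw [Phi, abs_div, abs_of_pos hsp, div_lt_one hsp]
  nlinarith [abs_nonneg u, sq_abs u]

lemma phi_strictMono : StrictMono Phi := by
  intro u w huw
  have hu0 : (0:ℝ) < 1 + u ^ 2 := by positivity
  have hw0 : (0:ℝ) < 1 + w ^ 2 := by positivity
  have hsu : Real.sqrt (1 + u ^ 2) ^ 2 = 1 + u ^ 2 := Real.sq_sqrt hu0.le
  have hsw : Real.sqrt (1 + w ^ 2) ^ 2 = 1 + w ^ 2 := Real.sq_sqrt hw0.le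
  have hsup : 0 < Real.sqrt (1 + u ^ 2) := Real.sqrt_pos.mpr hu0
  have hswp : 0 < Real.sqrt (1 + w ^ 2) := Real.sqrt_pos.mpr hw0
  rw [Phi, Phi, div_lt_div_iff₀ hsup hswp]
  rcases le_or_gt u 0 with h | h
  · rcases lt_or_ge 0 w with h2 | h2
    · have : u * Real.sqrt (1 + w ^ 2) ≤ 0 := mul_nonpos_of_nonpos_of_nonneg h hswp.le
      nlinarith
    · -- u < w ≤ 0
      have h2 : (-(w * Real.sqrt (1 + u ^ 2))) ^ 2 < (-(u * Real.sqrt (1 + w ^ 2))) ^ 2 := by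
        nlinarith [mul_pos hsup hswp]
      have h3 := lt_of_pow_lt_pow_left₀ 2
        (show (0:ℝ) ≤ -(u * Real.sqrt (1 + w ^ 2)) by nlinarith) h2
      linarith
  · -- 0 < u < w
    have h2 : (u * Real.sqrt (1 + w ^ 2)) ^ 2 < (w * Real.sqrt (1 + u ^ 2)) ^ 2 := by
      nlinarith [mul_pos hsup hswp]
    exact lt_of_pow_lt_pow_left₀ 2 (by nlinarith) h2

lemma phi_psi {v : ℝ} (hv : |v| < 1) : Phi (Psi v) = v := by
  have h0 : (0:ℝ) < 1 - v ^ 2 := by nlinarith [sq_abs v, abs_nonneg v]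
  have hs : Real.sqrt (1 - v ^ 2) ^ 2 = 1 - v ^ 2 := Real.sq_sqrt h0.le
  have hsp : 0 < Real.sqrt (1 - v ^ 2) := Real.sqrt_pos.mpr h0
  have key : 1 + (Psi v) ^ 2 = (1 / Real.sqrt (1 - v ^ 2)) ^ 2 := by
    rw [Psi]; field_simp; linarith [hs]
  rw [Phi, key, Real.sqrt_sq (by positivity), Psi]
  field_simp

lemma psi_phi (u : ℝ) : Psi (Phi u) = u := by
  have h0 : (0:ℝ) < 1 + u ^ 2 := by positivity
  have hs : Real.sqrt (1 + u ^ 2) ^ 2 = 1 + u ^ 2 := Real.sq_sqrt h0.le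
  have hsp : 0 < Real.sqrt (1 + u ^ 2) := Real.sqrt_pos.mpr h0
  have key : 1 - (Phi u) ^ 2 = (1 / Real.sqrt (1 + u ^ 2)) ^ 2 := by
    rw [Phi]; field_simp; linarith [hs]
  rw [Psi, key, Real.sqrt_sq (by positivity), Phi]
  field_simp

lemma psi_le_psi {v w : ℝ} (hv : |v| < 1) (hw : |w| < 1) (h : v ≤ w) : Psi v ≤ Psi w := by
  have := phi_strictMono.le_iff_le (a := Psi v) (b := Psi w)
  rw [phi_psi hv, phi_psi hw] at this
  exact this.mp h

lemma psi_min {v w : ℝ} (hv : |v| < 1) (hw : |w| < 1) : Psi (min v w) = min (Psi v) (Psi w) := by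
  rcases le_total v w with h | h
  · rw [min_eq_left h, min_eq_left (psi_le_psi hv hw h)]
  · rw [min_eq_right h, min_eq_right (psi_le_psi hw hv h)]

lemma psi_max {v w : ℝ} (hv : |v| < 1) (hw : |w| < 1) : Psi (max v w) = max (Psi v) (Psi w) := by
  rcases le_total v w with h | h
  · rw [max_eq_right h, max_eq_right (psi_le_psi hv hw h)]
  · rw [max_eq_left h, max_eq_left (psi_le_psi hw hv h)]

lemma psi_inj {v w : ℝ} (hv : |v| < 1) (hw : |w| < 1) (h : Psi v = Psi w) : v = w := by
  have := congrArg Phi h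
  rwa [phi_psi hv, phi_psi hw] at this

lemma med5_eq (a b m d e : EReal) (had : a ≤ d) (hae : a ≤ e) (hbd : b ≤ d) (hbe : b ≤ e) :
    med5 a b m d e = (a ⊔ b) ⊔ (m ⊓ d ⊓ e) := by
  apply le_antisymm
  · simp only [med5, sup_le_iff]
    refine ⟨⟨⟨⟨⟨⟨⟨⟨⟨?_, ?_⟩, ?_⟩, ?_⟩, ?_⟩, ?_⟩, ?_⟩, ?_⟩, ?_⟩, ?_⟩ <;>
    first
      | exact le_sup_of_le_left (le_sup_of_le_left (inf_le_left.trans inf_le_left))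
      | exact le_sup_of_le_left (le_sup_of_le_right (inf_le_left.trans inf_le_left))
      | exact le_sup_right
  · refine sup_le (sup_le ?_ ?_) ?_
    · have h : a = a ⊓ d ⊓ e := by rw [inf_eq_left.mpr had, inf_eq_left.mpr hae]
      calc a = a ⊓ d ⊓ e := h
        _ ≤ med5 a b m d e := by
          unfold med5
          exact le_sup_of_le_left (le_sup_of_le_left (le_sup_of_le_left
            (le_sup_of_le_left le_sup_right)))
    · have h : b = b ⊓ d ⊓ e := by rw [inf_eq_left.mpr hbd, inf_eq_left.mpr hbe]
      calc b = b ⊓ d ⊓ e := h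
        _ ≤ med5 a b m d e := by
          unfold med5; exact le_sup_of_le_left le_sup_right
    · unfold med5; exact le_sup_right

lemma inf_aux {t y : ℝ} (ht : |t| < 1) (hy : -1 < y) :
    ((Psi t : ℝ) : EReal) ⊓ (if y < 1 then ((Psi y : ℝ) : EReal) else ⊤)
      = ((Psi (min t y) : ℝ) : EReal) := by
  split_ifs with h
  · have hy' : |y| < 1 := abs_lt.mpr ⟨hy, h⟩
    rw [← EReal.coe_strictMono.monotone.map_min, psi_min ht hy']
  · push_neg at h
    rw [inf_top_eq, min_eq_left (le_trans (abs_lt.mp ht).2.le h)]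

lemma sup_aux {t y : ℝ} (ht : |t| < 1) (hy : y < 1) :
    ((Psi t : ℝ) : EReal) ⊔ (if -1 < y then ((Psi y : ℝ) : EReal) else ⊥)
      = ((Psi (max t y) : ℝ) : EReal) := by
  split_ifs with h
  · have hy' : |y| < 1 := abs_lt.mpr ⟨h, hy⟩
    rw [← EReal.coe_strictMono.monotone.map_max, psi_max ht hy']
  · push_neg at h
    rw [sup_bot_eq, max_eq_left (le_trans h (abs_lt.mp ht).1.le)]

lemma le_aux {y z : ℝ} (hy : y < 1) (hz : -1 < z) (hyz : y ≤ z) :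
    (if -1 < y then ((Psi y : ℝ) : EReal) else ⊥) ≤
      (if z < 1 then ((Psi z : ℝ) : EReal) else ⊤) := by
  split_ifs with h h'
  · exact EReal.coe_le_coe_iff.mpr (psi_le_psi (abs_lt.mpr ⟨h, hy⟩) (abs_lt.mpr ⟨hz, h'⟩) hyz)
  · exact le_top
  · exact bot_le
  · exact bot_le

lemma zeta_formula (κ₀ r₀ rb μ c x : ℝ) (hκ : 0 < κ₀) (hx0 : 0 ≤ x) (hxc : x ≤ c)
    (hab1 : Phi r₀ - Phi rb ≤ κ₀ * c) (hab2 : Phi rb - Phi r₀ ≤ κ₀ * c) :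
    zeta κ₀ r₀ rb μ c x =
      Psi (max (max (min (min (Phi μ) (Phi r₀ + κ₀ * x)) (Phi rb + κ₀ * (c - x)))
        (Phi rb - κ₀ * (c - x))) (Phi r₀ - κ₀ * x)) := by
  have hA := abs_lt.mp (phi_abs_lt r₀)
  have hB := abs_lt.mp (phi_abs_lt rb)
  have hM := abs_lt.mp (phi_abs_lt μ)
  have hkx : 0 ≤ κ₀ * x := mul_nonneg hκ.le hx0
  have hkcx : 0 ≤ κ₀ * (c - x) := mul_nonneg hκ.le (by linarith)
  have hkc : κ₀ * x + κ₀ * (c - x) = κ₀ * c := by ring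
  have h1 : hm κ₀ rb c x ≤ gp κ₀ r₀ x := by
    unfold hm gp; exact le_aux (by linarith) (by linarith) (by linarith)
  have h2 : hm κ₀ rb c x ≤ hp κ₀ rb c x := by
    unfold hm hp; exact le_aux (by linarith) (by linarith) (by linarith)
  have h3 : gm κ₀ r₀ x ≤ gp κ₀ r₀ x := by
    unfold gm gp; exact le_aux (by linarith) (by linarith) (by linarith)
  have h4 : gm κ₀ r₀ x ≤ hp κ₀ rb c x := by
    unfold gm hp; exact le_aux (by linarith) (by linarith) (by linarith)
  have hμ : ((μ : ℝ) : EReal) = ((Psi (Phi μ) : ℝ) : EReal) := by rw [psi_phi]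
  have hM1 : |min (Phi μ) (Phi r₀ + κ₀ * x)| < 1 :=
    abs_lt.mpr ⟨lt_min hM.1 (by linarith), lt_of_le_of_lt (min_le_left _ _) hM.2⟩
  have hM2 : |min (min (Phi μ) (Phi r₀ + κ₀ * x)) (Phi rb + κ₀ * (c - x))| < 1 :=
    abs_lt.mpr ⟨lt_min (abs_lt.mp hM1).1 (by linarith),
      lt_of_le_of_lt (min_le_left _ _) (abs_lt.mp hM1).2⟩
  have hM3 : |max (min (min (Phi μ) (Phi r₀ + κ₀ * x)) (Phi rb + κ₀ * (c - x)))
      (Phi rb - κ₀ * (c - x))| < 1 :=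
    abs_lt.mpr ⟨lt_of_lt_of_le (abs_lt.mp hM2).1 (le_max_left _ _),
      max_lt (abs_lt.mp hM2).2 (by linarith)⟩
  unfold zeta
  rw [med5_eq _ _ _ _ _ h1 h2 h3 h4, hμ]
  unfold gp gm hp hm
  rw [inf_aux (phi_abs_lt μ) (by linarith), inf_aux hM1 (by linarith),
    sup_comm, ← sup_assoc, sup_aux hM2 (by linarith), sup_aux hM3 (by linarith),
    EReal.toReal_coe]

/-- the real clamp function -/

noncomputable def Rr (A B m κ₀ c x : ℝ) : ℝ :=
  max (max (min (min m (A + κ₀ * x)) (B + κ₀ * (c - x))) (B - κ₀ * (c - x))) (A - κ₀ * x)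

lemma zeta_formula' (κ₀ r₀ rb μ c x : ℝ) (hκ : 0 < κ₀) (hx0 : 0 ≤ x) (hxc : x ≤ c)
    (hab1 : Phi r₀ - Phi rb ≤ κ₀ * c) (hab2 : Phi rb - Phi r₀ ≤ κ₀ * c) :
    zeta κ₀ r₀ rb μ c x = Psi (Rr (Phi r₀) (Phi rb) (Phi μ) κ₀ c x) :=
  zeta_formula κ₀ r₀ rb μ c x hκ hx0 hxc hab1 hab2

lemma R_bound {A B m κ₀ c x : ℝ} (hA : |A| < 1) (hB : |B| < 1) (hm : |m| < 1)
    (hkx : 0 ≤ κ₀ * x) (hkcx : 0 ≤ κ₀ * (c - x)) : |Rr A B m κ₀ c x| < 1 := by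
  have hA' := abs_lt.mp hA; have hB' := abs_lt.mp hB; have hm' := abs_lt.mp hm
  rw [Rr, abs_lt]
  constructor
  · have : -1 < min (min m (A + κ₀ * x)) (B + κ₀ * (c - x)) :=
      lt_min (lt_min (by linarith) (by linarith)) (by linarith)
    exact lt_of_lt_of_le this ((le_max_left _ _).trans (le_max_left _ _))
  · exact max_lt (max_lt (lt_of_le_of_lt (min_le_left _ _)
      (lt_of_le_of_lt (min_le_left _ _) hm'.2)) (by linarith)) (by linarith)

lemma R_eq_m_iff {A B m κ₀ c x : ℝ} (hab1 : A - B ≤ κ₀ * x + κ₀ * (c - x))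
    (hab2 : B - A ≤ κ₀ * x + κ₀ * (c - x)) (hkx : 0 ≤ κ₀ * x) (hkcx : 0 ≤ κ₀ * (c - x)) :
    Rr A B m κ₀ c x = m ↔ (|A - m| ≤ κ₀ * x ∧ |B - m| ≤ κ₀ * (c - x)) := by
  constructor
  · intro hR
    have e1 : B - κ₀ * (c - x) ≤ m := by
      rw [← hR, Rr]; exact (le_max_right _ _).trans (le_max_left _ _)
    have e2 : A - κ₀ * x ≤ m := by rw [← hR, Rr]; exact le_max_right _ _
    have e3 : m ≤ A + κ₀ * x := by
      by_contra h
      push_neg at h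
      have : Rr A B m κ₀ c x < m := by
        rw [Rr]
        refine max_lt (max_lt (lt_of_le_of_lt ((min_le_left _ _).trans (min_le_right _ _)) h)
          (by linarith)) (by linarith)
      linarith [hR ▸ this]
    have e4 : m ≤ B + κ₀ * (c - x) := by
      by_contra h
      push_neg at h
      have : Rr A B m κ₀ c x < m := by
        rw [Rr]
        refine max_lt (max_lt (lt_of_le_of_lt (min_le_right _ _) h) (by linarith)) (by linarith)
      linarith [hR ▸ this]
    exact ⟨abs_le.mpr ⟨by linarith, by linarith⟩, abs_le.mpr ⟨by linarith, by linarith⟩⟩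
  · rintro ⟨h1, h2⟩
    have h1' := abs_le.mp h1; have h2' := abs_le.mp h2
    rw [Rr, min_eq_left (by linarith : m ≤ A + κ₀ * x),
      min_eq_left (by linarith : m ≤ B + κ₀ * (c - x)),
      max_eq_left (by linarith : B - κ₀ * (c - x) ≤ m),
      max_eq_left (by linarith : A - κ₀ * x ≤ m)]

lemma R_eq_gside {A B m κ₀ c x : ℝ} (h1 : |B - m| ≤ κ₀ * (c - x))
    (h2 : B - A ≤ κ₀ * x + κ₀ * (c - x)) :
    Rr A B m κ₀ c x = max (min m (A + κ₀ * x)) (A - κ₀ * x) := by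
  have h1' := abs_le.mp h1
  rw [Rr, min_eq_left (le_trans (min_le_left _ _) (by linarith)),
    max_eq_left (le_min (by linarith) (by linarith) : B - κ₀ * (c - x) ≤ min m (A + κ₀ * x))]

lemma R_eq_hside {A B m κ₀ c x : ℝ} (h1 : |A - m| ≤ κ₀ * x)
    (h2 : A - B ≤ κ₀ * x + κ₀ * (c - x)) :
    Rr A B m κ₀ c x = max (min m (B + κ₀ * (c - x))) (B - κ₀ * (c - x)) := by
  have h1' := abs_le.mp h1
  rw [Rr, min_eq_left (by linarith : m ≤ A + κ₀ * x),
    max_eq_left (le_trans (le_min (by linarith) (by linarith) :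
      A - κ₀ * x ≤ min m (B + κ₀ * (c - x))) (le_max_left _ _))]

lemma psi_continuousOn : ContinuousOn Psi {v : ℝ | |v| < 1} := by
  apply ContinuousOn.div continuousOn_id
    (Continuous.continuousOn (by continuity))
  intro v hv
  have : 0 < 1 - v ^ 2 := by nlinarith [abs_lt.mp (show |v| < 1 from hv), sq_abs v, abs_nonneg v]
  exact (Real.sqrt_pos.mpr this).ne'

lemma R_continuous (A B m κ₀ c : ℝ) : Continuous (fun x => Rr A B m κ₀ c x) := by
  unfold Rr
  fun_prop

lemma lam_lower {κ₀ r₀ rb b μ : ℝ} (hkb : 0 < κ₀ * b) (h₁ : lamM κ₀ r₀ rb b ≤ (μ : EReal)) :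
    Phi r₀ + Phi rb - κ₀ * b ≤ 2 * Phi μ := by
  have hA := abs_lt.mp (phi_abs_lt r₀)
  have hB := abs_lt.mp (phi_abs_lt rb)
  have hM := abs_lt.mp (phi_abs_lt μ)
  unfold lamM at h₁
  split_ifs at h₁ with h
  · have h2 := EReal.coe_le_coe_iff.mp h₁
    have hl : |(Phi r₀ + Phi rb - κ₀ * b) / 2| < 1 := abs_lt.mpr ⟨h, by linarith⟩
    have h3 := phi_strictMono.monotone h2
    rw [phi_psi hl] at h3
    linarith
  · push_neg at h; linarith

lemma lam_upper {κ₀ r₀ rb b μ : ℝ} (hkb : 0 < κ₀ * b) (h₂ : (μ : EReal) ≤ lamP κ₀ r₀ rb b) :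
    2 * Phi μ ≤ Phi r₀ + Phi rb + κ₀ * b := by
  have hA := abs_lt.mp (phi_abs_lt r₀)
  have hB := abs_lt.mp (phi_abs_lt rb)
  have hM := abs_lt.mp (phi_abs_lt μ)
  unfold lamP at h₂
  split_ifs at h₂ with h
  · have h2 := EReal.coe_le_coe_iff.mp h₂
    have hl : |(Phi r₀ + Phi rb + κ₀ * b) / 2| < 1 := abs_lt.mpr ⟨by linarith, h⟩
    have h3 := phi_strictMono.monotone h2
    rw [phi_psi hl] at h3
    linarith
  · push_neg at h; linarith

lemma lamM_le {κ₀ r₀ rb c μ : ℝ} (hkc : 0 < κ₀ * c)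
    (h : Phi r₀ + Phi rb - κ₀ * c ≤ 2 * Phi μ) : lamM κ₀ r₀ rb c ≤ (μ : EReal) := by
  have hA := abs_lt.mp (phi_abs_lt r₀)
  have hB := abs_lt.mp (phi_abs_lt rb)
  unfold lamM
  split_ifs with h'
  · apply EReal.coe_le_coe_iff.mpr
    have := psi_le_psi (abs_lt.mpr ⟨h', by linarith⟩) (phi_abs_lt μ) (by linarith)
    rwa [psi_phi] at this
  · exact bot_le

lemma lamP_ge {κ₀ r₀ rb c μ : ℝ} (hkc : 0 < κ₀ * c)
    (h : 2 * Phi μ ≤ Phi r₀ + Phi rb + κ₀ * c) : (μ : EReal) ≤ lamP κ₀ r₀ rb c := by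
  have hA := abs_lt.mp (phi_abs_lt r₀)
  have hB := abs_lt.mp (phi_abs_lt rb)
  unfold lamP
  split_ifs with h'
  · apply EReal.coe_le_coe_iff.mpr
    have := psi_le_psi (phi_abs_lt μ) (abs_lt.mpr ⟨by linarith, h'⟩) (by linarith)
    rwa [psi_phi] at this
  · exact le_top

theorem stmt16 (κ₀ r₀ rb b c μ : ℝ) (hκ : κ₀ ∈ Set.Ioo (0 : ℝ) 1) (hb : 0 < b)
    (hcompat : |Phi r₀ - Phi rb| ≤ κ₀ * b) (hbc : b ≤ c)
    (h₁ : lamM κ₀ r₀ rb b ≤ (μ : EReal)) (h₂ : (μ : EReal) ≤ lamP κ₀ r₀ rb b) :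
    (lamM κ₀ r₀ rb c ≤ (μ : EReal) ∧ (μ : EReal) ≤ lamP κ₀ r₀ rb c) ∧
    ((∫ x in (0 : ℝ)..c, zeta κ₀ r₀ rb μ c x) -
        (∫ x in (0 : ℝ)..b, zeta κ₀ r₀ rb μ b x) = μ * (c - b)) ∧
    ∃ u v : ℝ, u ≤ v ∧ c - b ≤ v - u ∧
      {x ∈ Set.Icc (0 : ℝ) c | zeta κ₀ r₀ rb μ c x = μ} = Set.Icc u v := by
  obtain ⟨hk, hk1⟩ := hκ
  have hA := abs_lt.mp (phi_abs_lt r₀)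
  have hB := abs_lt.mp (phi_abs_lt rb)
  have hM := abs_lt.mp (phi_abs_lt μ)
  have hab := abs_le.mp hcompat
  have hkb : 0 < κ₀ * b := mul_pos hk hb
  have hc0 : 0 < c := lt_of_lt_of_le hb hbc
  have hkc : 0 < κ₀ * c := mul_pos hk hc0
  have hbc' : κ₀ * b ≤ κ₀ * c := mul_le_mul_of_nonneg_left hbc hk.le
  have hl := lam_lower hkb h₁
  have hu := lam_upper hkb h₂
  have habc : Phi r₀ - Phi rb ≤ κ₀ * c := le_trans hab.2 hbc'
  have habc' : Phi rb - Phi r₀ ≤ κ₀ * c := by linarith [hab.1]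
  have habb : Phi r₀ - Phi rb ≤ κ₀ * b := hab.2
  have habb' : Phi rb - Phi r₀ ≤ κ₀ * b := by linarith [hab.1]
  have hsum : |Phi r₀ - Phi μ| + |Phi rb - Phi μ| ≤ κ₀ * b := by
    rcases le_total (Phi r₀) (Phi μ) with h | h <;> rcases le_total (Phi rb) (Phi μ) with h' | h'
    · rw [abs_of_nonpos (by linarith), abs_of_nonpos (by linarith)]; linarith
    · rw [abs_of_nonpos (by linarith), abs_of_nonneg (by linarith)]; linarith
    · rw [abs_of_nonneg (by linarith), abs_of_nonpos (by linarith)]; linarith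
    · rw [abs_of_nonneg (by linarith), abs_of_nonneg (by linarith)]; linarith
  set u₀ : ℝ := |Phi r₀ - Phi μ| / κ₀ with hu₀def
  set w : ℝ := |Phi rb - Phi μ| / κ₀ with hwdef
  have hu₀ : κ₀ * u₀ = |Phi r₀ - Phi μ| := by rw [hu₀def]; field_simp
  have hw : κ₀ * w = |Phi rb - Phi μ| := by rw [hwdef]; field_simp
  have hu0 : 0 ≤ u₀ := by positivity
  have hw0 : 0 ≤ w := by positivity
  have huw : u₀ + w ≤ b := by nlinarith [hsum]
  set vb : ℝ := b - w with hvbdef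
  set vc : ℝ := c - w with hvcdef
  have hu₀vb : u₀ ≤ vb := by rw [hvbdef]; linarith
  have h0vb : 0 ≤ vb := le_trans hu0 hu₀vb
  have hvbvc : vb ≤ vc := by rw [hvbdef, hvcdef]; linarith
  have hvcc : vc ≤ c := by rw [hvcdef]; linarith
  have hvbb : vb ≤ b := by rw [hvbdef]; linarith
  refine ⟨⟨lamM_le hkc (by linarith), lamP_ge hkc (by linarith)⟩, ?_, ?_⟩
  · -- part (a)
    have hcontc : ContinuousOn (fun x => Psi (Rr (Phi r₀) (Phi rb) (Phi μ) κ₀ c x))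
        (Set.Icc 0 c) := by
      apply psi_continuousOn.comp (R_continuous _ _ _ _ _).continuousOn
      intro x hx
      exact R_bound (phi_abs_lt r₀) (phi_abs_lt rb) (phi_abs_lt μ)
        (mul_nonneg hk.le hx.1) (mul_nonneg hk.le (by linarith [hx.2]))
    have hcontb : ContinuousOn (fun x => Psi (Rr (Phi r₀) (Phi rb) (Phi μ) κ₀ b x))
        (Set.Icc 0 b) := by
      apply psi_continuousOn.comp (R_continuous _ _ _ _ _).continuousOn
      intro x hx
      exact R_bound (phi_abs_lt r₀) (phi_abs_lt rb) (phi_abs_lt μ)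
        (mul_nonneg hk.le hx.1) (mul_nonneg hk.le (by linarith [hx.2]))
    have hIc : ∀ a1 a2 : ℝ, 0 ≤ a1 → a1 ≤ a2 → a2 ≤ c →
        IntervalIntegrable (fun x => Psi (Rr (Phi r₀) (Phi rb) (Phi μ) κ₀ c x))
          MeasureTheory.volume a1 a2 := by
      intro a1 a2 p q r
      apply ContinuousOn.intervalIntegrable
      apply hcontc.mono
      rw [Set.uIcc_of_le q]
      exact Set.Icc_subset_Icc p r
    have hIb : ∀ a1 a2 : ℝ, 0 ≤ a1 → a1 ≤ a2 → a2 ≤ b →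
        IntervalIntegrable (fun x => Psi (Rr (Phi r₀) (Phi rb) (Phi μ) κ₀ b x))
          MeasureTheory.volume a1 a2 := by
      intro a1 a2 p q r
      apply ContinuousOn.intervalIntegrable
      apply hcontb.mono
      rw [Set.uIcc_of_le q]
      exact Set.Icc_subset_Icc p r
    have hzc : (∫ x in (0:ℝ)..c, zeta κ₀ r₀ rb μ c x)
        = ∫ x in (0:ℝ)..c, Psi (Rr (Phi r₀) (Phi rb) (Phi μ) κ₀ c x) := by
      apply intervalIntegral.integral_congr
      intro x hx
      rw [Set.uIcc_of_le hc0.le] at hx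
      exact zeta_formula' κ₀ r₀ rb μ c x hk hx.1 hx.2 habc habc'
    have hzb : (∫ x in (0:ℝ)..b, zeta κ₀ r₀ rb μ b x)
        = ∫ x in (0:ℝ)..b, Psi (Rr (Phi r₀) (Phi rb) (Phi μ) κ₀ b x) := by
      apply intervalIntegral.integral_congr
      intro x hx
      rw [Set.uIcc_of_le hb.le] at hx
      exact zeta_formula' κ₀ r₀ rb μ b x hk hx.1 hx.2 habb habb'
    have E1 : (∫ x in (0:ℝ)..vb, Psi (Rr (Phi r₀) (Phi rb) (Phi μ) κ₀ c x))
        = ∫ x in (0:ℝ)..vb, Psi (Rr (Phi r₀) (Phi rb) (Phi μ) κ₀ b x) := by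
      apply intervalIntegral.integral_congr
      intro x hx
      rw [Set.uIcc_of_le h0vb] at hx
      have hxvb : x ≤ vb := hx.2
      have hwx : w ≤ b - x := by rw [hvbdef] at hxvb; linarith
      have hbm : |Phi rb - Phi μ| ≤ κ₀ * (b - x) := by
        rw [← hw]; exact mul_le_mul_of_nonneg_left hwx hk.le
      have hbm' : |Phi rb - Phi μ| ≤ κ₀ * (c - x) := by nlinarith
      have hr1 : κ₀ * x + κ₀ * (c - x) = κ₀ * c := by ring
      have hr2 : κ₀ * x + κ₀ * (b - x) = κ₀ * b := by ring
      simp only []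
      rw [R_eq_gside hbm' (by linarith), R_eq_gside hbm (by linarith)]
    have E2 : (∫ x in vb..vc, Psi (Rr (Phi r₀) (Phi rb) (Phi μ) κ₀ c x))
        = (vc - vb) • μ := by
      have heq : Set.EqOn (fun x => Psi (Rr (Phi r₀) (Phi rb) (Phi μ) κ₀ c x))
          (fun _ => μ) (Set.uIcc vb vc) := by
        intro x hx
        rw [Set.uIcc_of_le hvbvc] at hx
        have hx1 : u₀ ≤ x := le_trans hu₀vb hx.1
        have hx2 : x ≤ vc := hx.2
        have hx0 : 0 ≤ x := le_trans (le_trans hu0 hu₀vb) hx.1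
        have hxc : x ≤ c := le_trans hx2 hvcc
        have hkx : 0 ≤ κ₀ * x := mul_nonneg hk.le hx0
        have hkcx : 0 ≤ κ₀ * (c - x) := mul_nonneg hk.le (by linarith)
        have ha1 : |Phi r₀ - Phi μ| ≤ κ₀ * x := by
          rw [← hu₀]; exact mul_le_mul_of_nonneg_left hx1 hk.le
        have ha2 : |Phi rb - Phi μ| ≤ κ₀ * (c - x) := by
          rw [← hw]
          apply mul_le_mul_of_nonneg_left _ hk.le
          rw [hvcdef] at hx2; linarith
        have hr1 : κ₀ * x + κ₀ * (c - x) = κ₀ * c := by ring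
        simp only []
        rw [show Rr (Phi r₀) (Phi rb) (Phi μ) κ₀ c x = Phi μ from
          (R_eq_m_iff (by linarith) (by linarith) hkx hkcx).mpr ⟨ha1, ha2⟩, psi_phi]
      rw [intervalIntegral.integral_congr heq, intervalIntegral.integral_const]
    have E3 : (∫ x in vc..c, Psi (Rr (Phi r₀) (Phi rb) (Phi μ) κ₀ c x))
        = ∫ x in vb..b, Psi (Rr (Phi r₀) (Phi rb) (Phi μ) κ₀ b x) := by
      have t1 := intervalIntegral.integral_comp_add_right (a := vb) (b := b)
        (f := fun x => Psi (Rr (Phi r₀) (Phi rb) (Phi μ) κ₀ c x)) (c - b)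
      rw [show vb + (c - b) = vc from by rw [hvbdef, hvcdef]; ring,
        show b + (c - b) = c from by ring] at t1
      rw [← t1]
      apply intervalIntegral.integral_congr
      intro y hy
      rw [Set.uIcc_of_le hvbb] at hy
      have hy1 : u₀ ≤ y := le_trans hu₀vb hy.1
      have hAy : |Phi r₀ - Phi μ| ≤ κ₀ * y := by
        rw [← hu₀]; exact mul_le_mul_of_nonneg_left hy1 hk.le
      have hAy' : |Phi r₀ - Phi μ| ≤ κ₀ * (y + (c - b)) :=
        le_trans hAy (mul_le_mul_of_nonneg_left (by linarith) hk.le)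
      have hr1 : κ₀ * (y + (c - b)) + κ₀ * (c - (y + (c - b))) = κ₀ * c := by ring
      have hr2 : κ₀ * y + κ₀ * (b - y) = κ₀ * b := by ring
      simp only []
      rw [R_eq_hside hAy' (by linarith), R_eq_hside hAy (by linarith),
        show c - (y + (c - b)) = b - y from by ring]
    rw [hzc, hzb,
      ← intervalIntegral.integral_add_adjacent_intervals (hIc 0 vb le_rfl h0vb (by linarith))
        (hIc vb c h0vb (by linarith) le_rfl),
      ← intervalIntegral.integral_add_adjacent_intervals
        (hIc vb vc h0vb hvbvc (by linarith)) (hIc vc c (by linarith) hvcc le_rfl),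
      ← intervalIntegral.integral_add_adjacent_intervals (hIb 0 vb le_rfl h0vb hvbb)
        (hIb vb b h0vb hvbb le_rfl),
      E1, E2, E3, smul_eq_mul,
      show vc - vb = c - b from by rw [hvbdef, hvcdef]; ring]
    ring
  · -- part (b)
    refine ⟨u₀, vc, by linarith, by rw [hvcdef]; linarith, ?_⟩
    ext x
    simp only [Set.mem_setOf_eq, Set.mem_Icc]
    constructor
    · rintro ⟨⟨hx0, hxc⟩, hz⟩
      rw [zeta_formula' κ₀ r₀ rb μ c x hk hx0 hxc habc habc'] at hz
      have hz' : Psi (Rr (Phi r₀) (Phi rb) (Phi μ) κ₀ c x) = Psi (Phi μ) := by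
        rw [hz, psi_phi]
      have hkx : 0 ≤ κ₀ * x := mul_nonneg hk.le hx0
      have hkcx : 0 ≤ κ₀ * (c - x) := mul_nonneg hk.le (by linarith)
      have hr1 : κ₀ * x + κ₀ * (c - x) = κ₀ * c := by ring
      have hR := psi_inj (R_bound (phi_abs_lt r₀) (phi_abs_lt rb) (phi_abs_lt μ) hkx hkcx)
        (phi_abs_lt μ) hz'
      obtain ⟨q1, q2⟩ := (R_eq_m_iff (by linarith) (by linarith) hkx hkcx).mp hR
      constructor
      · have : κ₀ * u₀ ≤ κ₀ * x := by rw [hu₀]; exact q1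
        exact le_of_mul_le_mul_left this hk
      · have : κ₀ * w ≤ κ₀ * (c - x) := by rw [hw]; exact q2
        have := le_of_mul_le_mul_left this hk
        rw [hvcdef]; linarith
    · rintro ⟨h1, h2⟩
      have hx0 : 0 ≤ x := le_trans hu0 h1
      have hxc : x ≤ c := le_trans h2 hvcc
      have hkx : 0 ≤ κ₀ * x := mul_nonneg hk.le hx0
      have hkcx : 0 ≤ κ₀ * (c - x) := mul_nonneg hk.le (by linarith)
      have hr1 : κ₀ * x + κ₀ * (c - x) = κ₀ * c := by ring
      have ha1 : |Phi r₀ - Phi μ| ≤ κ₀ * x := by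
        rw [← hu₀]; exact mul_le_mul_of_nonneg_left h1 hk.le
      have ha2 : |Phi rb - Phi μ| ≤ κ₀ * (c - x) := by
        rw [← hw]
        apply mul_le_mul_of_nonneg_left _ hk.le
        rw [hvcdef] at h2; linarith
      refine ⟨⟨hx0, hxc⟩, ?_⟩
      rw [zeta_formula' κ₀ r₀ rb μ c x hk hx0 hxc habc habc',
        show Rr (Phi r₀) (Phi rb) (Phi μ) κ₀ c x = Phi μ from
          (R_eq_m_iff (by linarith) (by linarith) hkx hkcx).mpr ⟨ha1, ha2⟩, psi_phi]
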